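/- Let u and v be binary words with |u| = |v| = n ≥ 2 such that ||u|_c − |v|_c| = 1 for some letter c ∈ {a,b}. Then (u,v) is not mutually abelian-unbordered; that is, (u,v) has an internal abelian-border or an external abelian-border. -/
import Mathlib

/-- Abelian equivalence of binary words; the alphabet `{a, b}` is encoded by
`Bool` with `a = true` and `b = false`. -/
def AbEq (x y : List Bool) : Prop :=
  x.count true = y.count true ∧ x.count false = y.count false

/-- `(x, y)` is an internal abelian-border of `(u, v)`: `x` is a nonempty proper
suffix of `u`, `y` is a proper prefix of `v`, and `x ~ y`. -/
def IsIntBorder (u v x y : List Bool) : Prop :=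
  x ≠ [] ∧ x ≠ u ∧ x <:+ u ∧ y <+: v ∧ y ≠ v ∧ AbEq x y

/-- `(x, y)` is an external abelian-border of `(u, v)`: `x` is a nonempty proper
prefix of `u`, `y` is a proper suffix of `v`, and `x ~ y`. -/
def IsExtBorder (u v x y : List Bool) : Prop :=
  x ≠ [] ∧ x ≠ u ∧ x <+: u ∧ y <:+ v ∧ y ≠ v ∧ AbEq x y

/-- `(u, v)` has an internal abelian-border. -/
def HasIntB (u v : List Bool) : Prop := ∃ x y, IsIntBorder u v x y

/-- `(u, v)` has an external abelian-border. -/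
def HasExtB (u v : List Bool) : Prop := ∃ x y, IsExtBorder u v x y

/-- `(u, v)` is mutually abelian-bordered. -/
def MAB (u v : List Bool) : Prop := HasIntB u v ∧ HasExtB u v

/-- `(u, v)` is mutually abelian-unbordered. -/
def MAU (u v : List Bool) : Prop := ¬ HasIntB u v ∧ ¬ HasExtB u v

/-- `lsb u v` is the length of the shortest internal abelian-border of `(u, v)`:
the least `t` with `1 ≤ t ≤ |u| - 1` such that the suffix of `u` of length `t`
is abelian equivalent to the prefix of `v` of length `t`. -/
noncomputable def lsb (u v : List Bool) : ℕ :=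
  sInf {t | 1 ≤ t ∧ t ≤ u.length - 1 ∧ AbEq (u.drop (u.length - t)) (v.take t)}

/-! ### Auxiliary machinery -/

lemma ab13_tf (w : List Bool) : w.count true + w.count false = w.length := by
  induction w with
  | nil => rfl
  | cons a l ih => cases a <;> simp [List.count_cons] <;> omega

/-- `ab13F u v t` = (#true in prefix of `v` of length `t`) minus
(#true in suffix of `u` of length `t`). -/
def ab13F (u v : List Bool) (t : ℕ) : ℤ :=
  ((v.take t).count true : ℤ) - ((u.drop (u.length - t)).count true : ℤ)

lemma ab13_zero (u v : List Bool) : ab13F u v 0 = 0 := by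
  simp [ab13F]

lemma ab13_take_succ (w : List Bool) (t : ℕ) :
    ((w.take (t+1)).count true : ℤ) = ((w.take t).count true : ℤ) ∨
    ((w.take (t+1)).count true : ℤ) = ((w.take t).count true : ℤ) + 1 := by
  rw [List.take_succ]
  cases h : w[t]? with
  | none => simp
  | some b =>
    cases b
    · left; simp [List.count_append]
    · right; simp [List.count_append]

lemma ab13_drop_succ (w : List Bool) (t : ℕ) :
    ((w.drop t).count true : ℤ) = ((w.drop (t+1)).count true : ℤ) ∨
    ((w.drop t).count true : ℤ) = ((w.drop (t+1)).count true : ℤ) + 1 := by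
  by_cases ht : t < w.length
  · rw [List.drop_eq_getElem_cons ht]
    rcases Bool.eq_false_or_eq_true w[t] with h | h <;> rw [h]
    · right; simp [List.count_cons]
    · left; simp [List.count_cons]
  · left
    rw [List.drop_eq_nil_of_le (le_of_not_gt ht), List.drop_eq_nil_of_le (by omega)]

lemma ab13_step (u v : List Bool) (t : ℕ) (ht : t < u.length) :
    ab13F u v t - 1 ≤ ab13F u v (t+1) ∧ ab13F u v (t+1) ≤ ab13F u v t + 1 := by
  have h1 := ab13_take_succ v t
  have h2 := ab13_drop_succ u (u.length - (t+1))
  have h3 : u.length - (t+1) + 1 = u.length - t := by omega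
  rw [h3] at h2
  unfold ab13F
  rcases h1 with h1 | h1 <;> rcases h2 with h2 | h2 <;> omega

lemma ab13_rel (u v : List Bool) (n t : ℕ) (hu : u.length = n) (hv : v.length = n) (ht : t ≤ n) :
    ab13F u v t = ((v.count true : ℤ) - u.count true) + ab13F v u (n - t) := by
  unfold ab13F
  have h1 : ((v.take t).count true : ℤ) + ((v.drop t).count true : ℤ) = v.count true := by
    rw [← Nat.cast_add, ← List.count_append, List.take_append_drop]
  have h2 : ((u.take (n-t)).count true : ℤ) + ((u.drop (n-t)).count true : ℤ) = u.count true := by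
    rw [← Nat.cast_add, ← List.count_append, List.take_append_drop]
  have h3 : v.length - (n - t) = t := by omega
  rw [hu, h3]
  omega

lemma ab13_int (u v : List Bool) (n t : ℕ) (hu : u.length = n) (hv : v.length = n)
    (h1 : 1 ≤ t) (h2 : t ≤ n - 1) (hn : 2 ≤ n) (h0 : ab13F u v t = 0) : HasIntB u v := by
  have hxl : (u.drop (u.length - t)).length = t := by rw [List.length_drop]; omega
  have hyl : (v.take t).length = t := by rw [List.length_take]; omega
  unfold ab13F at h0
  have hcnt : (u.drop (u.length - t)).count true = (v.take t).count true := by omega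
  refine ⟨u.drop (u.length - t), v.take t, ?_, ?_, List.drop_suffix _ _,
    List.take_prefix _ _, ?_, hcnt, ?_⟩
  · intro hx; rw [hx] at hxl; simp at hxl; omega
  · intro hx; rw [hx] at hxl; omega
  · intro hy; rw [hy] at hyl; omega
  · have t1 := ab13_tf (u.drop (u.length - t))
    have t2 := ab13_tf (v.take t)
    omega

lemma ab13_ext (u v : List Bool) (n t : ℕ) (hu : u.length = n) (hv : v.length = n)
    (h1 : 1 ≤ t) (h2 : t ≤ n - 1) (hn : 2 ≤ n) (h0 : ab13F v u t = 0) : HasExtB u v := by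
  have hxl : (u.take t).length = t := by rw [List.length_take]; omega
  have hyl : (v.drop (v.length - t)).length = t := by rw [List.length_drop]; omega
  unfold ab13F at h0
  have hcnt : (u.take t).count true = (v.drop (v.length - t)).count true := by omega
  refine ⟨u.take t, v.drop (v.length - t), ?_, ?_, List.take_prefix _ _,
    List.drop_suffix _ _, ?_, hcnt, ?_⟩
  · intro hx; rw [hx] at hxl; simp at hxl; omega
  · intro hx; rw [hx] at hxl; omega
  · intro hy; rw [hy] at hyl; omega
  · have t1 := ab13_tf (u.take t)
    have t2 := ab13_tf (v.drop (v.length - t))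
    omega

lemma ab13_persist (u v : List Bool) (n : ℕ) (hn : 2 ≤ n) (hu : u.length = n)
    (ε : ℤ) (hε : ε = 1 ∨ ε = -1)
    (hnz : ∀ t, 1 ≤ t → t ≤ n - 1 → ab13F u v t ≠ 0)
    (h1 : 1 ≤ ε * ab13F u v 1) :
    ∀ t, 1 ≤ t → t ≤ n - 1 → 1 ≤ ε * ab13F u v t := by
  intro t
  induction t with
  | zero => intro ha _; exact absurd ha (by omega)
  | succ k ih =>
    intro hk1 hk2
    rcases Nat.eq_zero_or_pos k with hk | hk
    · subst hk; exact h1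
    · have ihk := ih hk (by omega)
      have hstep := ab13_step u v k (by omega)
      have hnzk := hnz (k+1) (by omega) hk2
      rcases hε with h | h <;> subst h <;> simp only [one_mul, neg_mul] at * <;> omega

theorem stmt_13 (n : ℕ) (hn : 2 ≤ n) (u v : List Bool)
    (hu : u.length = n) (hv : v.length = n)
    (h : ∃ c : Bool, ((u.count c : ℤ) - (v.count c : ℤ)).natAbs = 1) :
    HasIntB u v ∨ HasExtB u v := by
  by_contra hcon
  push_neg at hcon
  obtain ⟨hI, hE⟩ := hcon
  -- the count difference
  have hd : (u.count true : ℤ) - v.count true = 1 ∨ (u.count true : ℤ) - v.count true = -1 := by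
    obtain ⟨c, hc⟩ := h
    have t1 := ab13_tf u
    have t2 := ab13_tf v
    cases c <;> omega
  have hFnz : ∀ t, 1 ≤ t → t ≤ n - 1 → ab13F u v t ≠ 0 := fun t h1 h2 h0 =>
    hI (ab13_int u v n t hu hv h1 h2 hn h0)
  have hGnz : ∀ t, 1 ≤ t → t ≤ n - 1 → ab13F v u t ≠ 0 := fun t h1 h2 h0 =>
    hE (ab13_ext u v n t hu hv h1 h2 hn h0)
  have hF0 := ab13_zero u v
  have hG0 := ab13_zero v u
  have hFstep0 := ab13_step u v 0 (by omega)
  have hGstep0 := ab13_step v u 0 (by omega)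
  simp only [zero_add] at hFstep0 hGstep0
  have hF1 : ab13F u v 1 = 1 ∨ ab13F u v 1 = -1 := by
    have := hFnz 1 le_rfl (by omega); omega
  have hG1 : -1 ≤ ab13F v u 1 ∧ ab13F v u 1 ≤ 1 := by omega
  -- choose the sign ε of F on [1, n-1]
  obtain ⟨ε, hε, hεF1⟩ : ∃ ε : ℤ, (ε = 1 ∨ ε = -1) ∧ ε * ab13F u v 1 = 1 := by
    rcases hF1 with h | h
    · exact ⟨1, Or.inl rfl, by rw [h]; ring⟩
    · exact ⟨-1, Or.inr rfl, by rw [h]; ring⟩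
  have hFsign := ab13_persist u v n hn hu ε hε hFnz (le_of_eq hεF1.symm)
  -- the relations
  have relF : ∀ t, t ≤ n → ab13F u v t =
      ((v.count true : ℤ) - u.count true) + ab13F v u (n - t) :=
    fun t ht => ab13_rel u v n t hu hv ht
  -- G also has sign ε on [1, n-1]
  have hGsign : ∀ s, 1 ≤ s → s ≤ n - 1 → 1 ≤ ε * ab13F v u s := by
    intro s h1 h2
    have hFs := hFsign (n - s) (by omega) (by omega)
    have hr := relF (n - s) (by omega)
    rw [show n - (n - s) = s from by omega] at hr
    have hnzs := hGnz s h1 h2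
    rcases hε with h | h <;> subst h <;> rcases hd with h | h <;>
      simp only [one_mul, neg_mul] at * <;> omega
  -- endgame
  have A := hFsign (n - 1) (by omega) le_rfl
  have B := hGsign (n - 1) (by omega) le_rfl
  have R1 := relF 1 (by omega)
  have R2 := ab13_rel v u n 1 hv hu (by omega)
  rcases hε with h | h <;> subst h <;> rcases hd with h | h <;>
    simp only [one_mul, neg_mul] at * <;> omega
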